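/- The function x ↦ x·Δ'(x)/Δ(x), where Δ(x) = ∑_{d ∈ D} x^d/d! for a finite set D of natural numbers with at least two elements, is strictly increasing on (0, ∞). -/

import Mathlib

open scoped BigOperators

/-- `Δ(x) = ∑_{d ∈ D} x^d / d!` -/
noncomputable def Delta (D : Finset ℕ) (x : ℝ) : ℝ :=
  ∑ d ∈ D, x ^ d / (Nat.factorial d)

private lemma key_pow (d : ℕ) (x : ℝ) : x * ((d : ℝ) * x ^ (d - 1)) = (d : ℝ) * x ^ d := by
  cases d with
  | zero => simp
  | succ n =>
    push_cast
    rw [pow_succ]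
    ring

private lemma term1 (d : ℕ) (x k : ℝ) :
    x * ((d : ℝ) * x ^ (d - 1) / k) = (d : ℝ) * x ^ d / k := by
  rw [← mul_div_assoc, key_pow]

private lemma term2 (d : ℕ) (x k : ℝ) :
    x * ((d : ℝ) * ((d : ℝ) * x ^ (d - 1)) / k) = (d : ℝ) * ((d : ℝ) * x ^ d) / k := by
  rw [← mul_div_assoc]
  have h : x * ((d : ℝ) * ((d : ℝ) * x ^ (d - 1))) = (d : ℝ) * (x * ((d : ℝ) * x ^ (d - 1))) := by
    ring
  rw [h, key_pow]

/-- Strict Cauchy–Schwarz / positive variance with weights. -/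
private lemma cs_strict (D : Finset ℕ) (hD : 2 ≤ D.card) (a : ℕ → ℝ)
    (ha : ∀ d ∈ D, 0 < a d) :
    (∑ d ∈ D, (d : ℝ) * a d) ^ 2 <
      (∑ d ∈ D, (d : ℝ) ^ 2 * a d) * (∑ d ∈ D, a d) := by
  set Q := ∑ d ∈ D, (d : ℝ) ^ 2 * a d with hQ
  set S := ∑ d ∈ D, a d with hS
  set M := ∑ d ∈ D, (d : ℝ) * a d with hM
  have e1 : Q * S = ∑ d ∈ D, ∑ e ∈ D, ((d : ℝ) ^ 2 * a d) * a e :=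
    Finset.sum_mul_sum _ _ _ _
  have e2 : S * Q = ∑ d ∈ D, ∑ e ∈ D, a d * ((e : ℝ) ^ 2 * a e) :=
    Finset.sum_mul_sum _ _ _ _
  have e3 : M * M = ∑ d ∈ D, ∑ e ∈ D, ((d : ℝ) * a d) * ((e : ℝ) * a e) :=
    Finset.sum_mul_sum _ _ _ _
  have key : ∑ d ∈ D, ∑ e ∈ D, ((d : ℝ) - (e : ℝ)) ^ 2 * (a d * a e)
      = Q * S + S * Q - 2 * (M * M) := by
    rw [e1, e2, e3, ← Finset.sum_add_distrib, Finset.mul_sum, ← Finset.sum_sub_distrib]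
    apply Finset.sum_congr rfl
    intro d _
    rw [Finset.mul_sum, ← Finset.sum_add_distrib, ← Finset.sum_sub_distrib]
    apply Finset.sum_congr rfl
    intro e _
    ring
  obtain ⟨d₀, hd₀, e₀, he₀, hne⟩ := Finset.one_lt_card.mp (by omega : 1 < D.card)
  have hpos : 0 < ∑ d ∈ D, ∑ e ∈ D, ((d : ℝ) - (e : ℝ)) ^ 2 * (a d * a e) := by
    apply Finset.sum_pos'
    · intro d hd
      apply Finset.sum_nonneg
      intro e he
      have := (ha d hd).le
      have := (ha e he).le
      positivity
    · refine ⟨d₀, hd₀, Finset.sum_pos' ?_ ⟨e₀, he₀, ?_⟩⟩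
      · intro e he
        have := (ha d₀ hd₀).le
        have := (ha e he).le
        positivity
      · have hcast : ((d₀ : ℝ) - (e₀ : ℝ)) ≠ 0 := by
          simp only [sub_ne_zero]
          exact_mod_cast hne
        have h1 := ha d₀ hd₀
        have h2 := ha e₀ he₀
        positivity
  nlinarith [hpos, key]

theorem stmt_0 (D : Finset ℕ) (hD : 2 ≤ D.card) :
    StrictMonoOn (fun x : ℝ => x * deriv (Delta D) x / Delta D x) (Set.Ioi 0) := by
  have hDne : D.Nonempty := Finset.card_pos.mp (by omega)
  set S : ℝ → ℝ := fun x => ∑ d ∈ D, x ^ d / (Nat.factorial d) with hSdef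
  set M : ℝ → ℝ := fun x => ∑ d ∈ D, (d : ℝ) * x ^ d / (Nat.factorial d) with hMdef
  have hDS : Delta D = S := rfl
  have hSd : ∀ x : ℝ, HasDerivAt S
      (∑ d ∈ D, (d : ℝ) * x ^ (d - 1) / (Nat.factorial d)) x := fun x =>
    HasDerivAt.fun_sum fun d _ => (hasDerivAt_pow d x).div_const _
  have hMd : ∀ x : ℝ, HasDerivAt M
      (∑ d ∈ D, (d : ℝ) * ((d : ℝ) * x ^ (d - 1)) / (Nat.factorial d)) x := fun x =>
    HasDerivAt.fun_sum fun d _ => ((hasDerivAt_pow d x).const_mul _).div_const _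
  have hfacpos : ∀ d : ℕ, (0 : ℝ) < (Nat.factorial d : ℝ) := fun d => by
    exact_mod_cast d.factorial_pos
  have hSpos : ∀ x : ℝ, 0 < x → 0 < S x := fun x hx =>
    Finset.sum_pos (fun d _ => div_pos (pow_pos hx d) (hfacpos d)) hDne
  -- the "nice" form of the function
  have hxS : ∀ x : ℝ, x * (∑ d ∈ D, (d : ℝ) * x ^ (d - 1) / (Nat.factorial d)) = M x := by
    intro x
    rw [Finset.mul_sum]
    exact Finset.sum_congr rfl fun d _ => term1 d x _
  have hxM : ∀ x : ℝ, x * (∑ d ∈ D, (d : ℝ) * ((d : ℝ) * x ^ (d - 1)) / (Nat.factorial d))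
      = ∑ d ∈ D, (d : ℝ) * ((d : ℝ) * x ^ d) / (Nat.factorial d) := by
    intro x
    rw [Finset.mul_sum]
    exact Finset.sum_congr rfl fun d _ => term2 d x _
  have hEq : ∀ x ∈ Set.Ioi (0 : ℝ), x * deriv (Delta D) x / Delta D x = M x / S x := by
    intro x _
    rw [hDS, (hSd x).deriv, hxS x]
  have hg : StrictMonoOn (fun x => M x / S x) (Set.Ioi 0) := by
    have hMc : Continuous M := continuous_finset_sum _ fun d _ =>
      (continuous_const.mul (continuous_pow d)).div_const _
    have hSc : Continuous S := continuous_finset_sum _ fun d _ =>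
      (continuous_pow d).div_const _
    apply strictMonoOn_of_deriv_pos (convex_Ioi 0)
    · exact ContinuousOn.div hMc.continuousOn hSc.continuousOn
        fun x hx => (hSpos x hx).ne'
    · rw [interior_Ioi]
      intro x hx
      have hx0 : (0 : ℝ) < x := hx
      have hSne : S x ≠ 0 := (hSpos x hx0).ne'
      have hd : HasDerivAt (fun x => M x / S x)
          (((∑ d ∈ D, (d : ℝ) * ((d : ℝ) * x ^ (d - 1)) / (Nat.factorial d)) * S x
            - M x * (∑ d ∈ D, (d : ℝ) * x ^ (d - 1) / (Nat.factorial d))) / (S x) ^ 2) x :=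
        (hMd x).div (hSd x) hSne
      rw [hd.deriv]
      apply div_pos ?_ (pow_pos (hSpos x hx0) 2)
      -- positivity of the numerator, via variance
      set Q : ℝ := ∑ d ∈ D, (d : ℝ) * ((d : ℝ) * x ^ d) / (Nat.factorial d) with hQdef
      have hvar : M x * M x < Q * S x := by
        have hcs := cs_strict D hD (fun d => x ^ d / (Nat.factorial d))
          (fun d _ => div_pos (pow_pos hx0 d) (hfacpos d))
        have hMrw : M x = ∑ d ∈ D, (d : ℝ) * (x ^ d / (Nat.factorial d)) := by
          exact Finset.sum_congr rfl fun d _ => by ring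
        have hQrw : Q = ∑ d ∈ D, (d : ℝ) ^ 2 * (x ^ d / (Nat.factorial d)) := by
          rw [hQdef]
          exact Finset.sum_congr rfl fun d _ => by ring
        have hSrw : S x = ∑ d ∈ D, x ^ d / ((Nat.factorial d : ℝ)) := rfl
        rw [hMrw, hQrw, hSrw, ← sq]
        exact hcs
      have hmulx : x * ((∑ d ∈ D, (d : ℝ) * ((d : ℝ) * x ^ (d - 1)) / (Nat.factorial d)) * S x
            - M x * (∑ d ∈ D, (d : ℝ) * x ^ (d - 1) / (Nat.factorial d)))
          = Q * S x - M x * M x := by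
        have h1 := hxS x
        have h2 := hxM x
        calc x * ((∑ d ∈ D, (d : ℝ) * ((d : ℝ) * x ^ (d - 1)) / (Nat.factorial d)) * S x
              - M x * (∑ d ∈ D, (d : ℝ) * x ^ (d - 1) / (Nat.factorial d)))
            = (x * (∑ d ∈ D, (d : ℝ) * ((d : ℝ) * x ^ (d - 1)) / (Nat.factorial d))) * S x
              - M x * (x * (∑ d ∈ D, (d : ℝ) * x ^ (d - 1) / (Nat.factorial d))) := by ring
          _ = Q * S x - M x * M x := by rw [h1, h2]
      nlinarith [hvar, hmulx, hx0]
  intro x hx y hy hxy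
  have h1 := hEq x hx
  have h2 := hEq y hy
  simp only [h1, h2]
  exact hg hx hy hxy
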